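/- Let h : ℝ² → ℝ² be a C¹ diffeomorphism whose derivative at every point x has lower-triangular form Dh(x) = [[χ₁₁(x), 0], [χ₁₂(x), χ₂₂(x)]], with sup_x |χ₂₂(x)|/|χ₁₁(x)| < 1 and sup_x |χ₁₂(x)|/|χ₁₁(x)| < ∞. Then there exists α > 0 and κ ∈ (0,1) such that the cone C_α = {(x₁,x₂) : |x₂| ≤ α|x₁|} satisfies Dh(x)(C_α) ⊂ C_{κα} for every x ∈ ℝ². -/
import Mathlib


/-- If the derivative of a C¹ diffeomorphism `h : ℝ² → ℝ²` has the
lower-triangular form `Dh(x) = [[χ₁₁ x, 0], [χ₁₂ x, χ₂₂ x]]` with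
`sup |χ₂₂|/|χ₁₁| < 1` and `sup |χ₁₂|/|χ₁₁| < ∞`, then there exist `α > 0` and
`κ ∈ (0,1)` such that the cone `C_α = {(x₁,x₂) : |x₂| ≤ α |x₁|}` satisfies
`Dh(x)(C_α) ⊆ C_{κα}` for every `x`. -/
theorem stmt_1 (χ11 χ12 χ22 : ℝ × ℝ → ℝ)
    (h : ℝ × ℝ → ℝ × ℝ) (hdiff : Function.Bijective h)
    (s : ℝ) (hs : s < 1) (hχ22 : ∀ x, |χ22 x| ≤ s * |χ11 x|)
    (Mb : ℝ) (hχ12 : ∀ x, |χ12 x| ≤ Mb * |χ11 x|) :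
    ∃ α : ℝ, 0 < α ∧ ∃ κ : ℝ, 0 < κ ∧ κ < 1 ∧
      ∀ x v : ℝ × ℝ, |v.2| ≤ α * |v.1| →
        |χ12 x * v.1 + χ22 x * v.2| ≤ (κ * α) * |χ11 x * v.1| := by
  set s' : ℝ := max s 0 with hs'def
  set M : ℝ := max Mb 0 with hMdef
  have hs'0 : 0 ≤ s' := le_max_right _ _
  have hs'1 : s' < 1 := max_lt hs one_pos
  have hM0 : 0 ≤ M := le_max_right _ _
  set κ : ℝ := (1 + s') / 2 with hκdef
  set α : ℝ := 2 * M / (1 - s') + 1 with hαdef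
  have h1s : 0 < 1 - s' := by linarith
  have hα0 : 0 < α := by positivity
  refine ⟨α, hα0, κ, by positivity, by simp only [hκdef]; linarith, ?_⟩
  intro x v hv
  have hχ22' : |χ22 x| ≤ s' * |χ11 x| :=
    (hχ22 x).trans (mul_le_mul_of_nonneg_right (le_max_left _ _) (abs_nonneg _))
  have hχ12' : |χ12 x| ≤ M * |χ11 x| :=
    (hχ12 x).trans (mul_le_mul_of_nonneg_right (le_max_left _ _) (abs_nonneg _))
  have he : (1 - s') * (2 * M / (1 - s')) = 2 * M := by field_simp
  have key : M + s' * α ≤ κ * α := by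
    rw [hκdef, hαdef]; nlinarith [he]
  calc |χ12 x * v.1 + χ22 x * v.2|
      ≤ |χ12 x * v.1| + |χ22 x * v.2| := abs_add_le _ _
    _ = |χ12 x| * |v.1| + |χ22 x| * |v.2| := by rw [abs_mul, abs_mul]
    _ ≤ M * |χ11 x| * |v.1| + s' * |χ11 x| * (α * |v.1|) := by
        gcongr
    _ = (M + s' * α) * (|χ11 x| * |v.1|) := by ring
    _ ≤ (κ * α) * (|χ11 x| * |v.1|) := by
        apply mul_le_mul_of_nonneg_right key; positivity
    _ = (κ * α) * |χ11 x * v.1| := by rw [abs_mul]
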